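/- Let R, A, B, a, b, h, v, T₁, T₂, φ₂, φ₁, ε and ∂ be as in the context. Then the diagram commutes: for every t ∈ R, φ₁(∂ δ_t) = ((T₁ − id)(φ₂ δ_t), (T₂ − id)(φ₂ δ_t)); equivalently, φ₁ ∘ ∂ = ((T₁ − id) ∘ φ₂, (T₂ − id) ∘ φ₂) as ℤ-linear maps from ℤR to ℤR × ℤR. -/
import Mathlib


open Finsupp

/-- **Commutativity of the diagram (Lemma in Section 4).**
For the tiling system of a finite VH-T square complex, the diagram
`φ₁ ∘ ∂ = ((T₁ − id) ∘ φ₂, (T₂ − id) ∘ φ₂)` commutes. -/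
theorem stmt_3
    {R A B : Type*} [Fintype R] [Fintype A] [Fintype B]
    [DecidableEq R] [DecidableEq A] [DecidableEq B]
    (a : R → A) (b : R → B) (h v : R → R)
    (hh : ∀ t, h (h t) = t) (hv : ∀ t, v (v t) = t)
    (hcomm : ∀ t, h (v t) = v (h t))
    -- the transition operators T₁, T₂
    (T₁ T₂ : (R →₀ ℤ) →ₗ[ℤ] (R →₀ ℤ))
    (hT₁ : ∀ t : R, T₁ (single t 1) =
      (∑ s ∈ Finset.univ.filter fun s => b s = b (h t), single s (1 : ℤ)) - single (h t) 1)
    (hT₂ : ∀ t : R, T₂ (single t 1) =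
      (∑ s ∈ Finset.univ.filter fun s => a s = a (v t), single s (1 : ℤ)) - single (v t) 1)
    -- the map φ₂
    (φ₂ : (R →₀ ℤ) →ₗ[ℤ] (R →₀ ℤ))
    (hφ₂ : ∀ t : R, φ₂ (single t 1) =
      single t 1 - single (v t) 1 - single (h t) 1 + single (h (v t)) 1)
    -- involutions without fixed points on A and B, compatible with a, b, h, v
    (barA : A → A) (barB : B → B)
    (hbarA : ∀ x, barA (barA x) = x) (hbarB : ∀ x, barB (barB x) = x)
    (hbarAfix : ∀ x, barA x ≠ x) (hbarBfix : ∀ x, barB x ≠ x)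
    (hah : ∀ t, a (h t) = barA (a t)) (hbv : ∀ t, b (v t) = barB (b t))
    -- the map φ₁ : ℤE → ℤR × ℤR
    (φ₁ : ((A →₀ ℤ) × (B →₀ ℤ)) →ₗ[ℤ] ((R →₀ ℤ) × (R →₀ ℤ)))
    (hφ₁A : ∀ α : A, φ₁ (single α 1, 0) =
      (0, (∑ s ∈ Finset.univ.filter fun s => a s = barA α, single s (1 : ℤ)) -
        ∑ s ∈ Finset.univ.filter fun s => a s = α, single s (1 : ℤ)))
    (hφ₁B : ∀ β : B, φ₁ (0, single β 1) =
      ((∑ s ∈ Finset.univ.filter fun s => b s = β, single s (1 : ℤ)) -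
        ∑ s ∈ Finset.univ.filter fun s => b s = barB β, single s (1 : ℤ), 0))
    -- orientations A⁺, B⁺ and the map ε
    (Aplus : Set A) (Bplus : Set B)
    (hAplus : ∀ x : A, ∃! y, y ∈ Aplus ∧ (y = x ∨ y = barA x))
    (hBplus : ∀ x : B, ∃! y, y ∈ Bplus ∧ (y = x ∨ y = barB x))
    (ε : ((A →₀ ℤ) × (B →₀ ℤ)) →ₗ[ℤ] ((A →₀ ℤ) × (B →₀ ℤ)))
    (hεA : ∀ α ∈ Aplus, ε (single α 1, 0) = (single α 1, 0))
    (hεA' : ∀ α ∈ Aplus, ε (single (barA α) 1, 0) = -(single α 1, 0))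
    (hεB : ∀ β ∈ Bplus, ε (0, single β 1) = (0, single β 1))
    (hεB' : ∀ β ∈ Bplus, ε (0, single (barB β) 1) = -(0, single β 1))
    -- the boundary map ∂
    (bd : (R →₀ ℤ) →ₗ[ℤ] ((A →₀ ℤ) × (B →₀ ℤ)))
    (hbd : ∀ t : R, bd (single t 1) =
      ε ((single (a t) 1, 0) + (0, single (b (h t)) 1)
        - (single (a (v t)) 1, 0) - (0, single (b t) 1))) :
    (∀ t : R, φ₁ (bd (single t 1)) =
      ((T₁ - LinearMap.id : (R →₀ ℤ) →ₗ[ℤ] (R →₀ ℤ)) (φ₂ (single t 1)),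
       (T₂ - LinearMap.id : (R →₀ ℤ) →ₗ[ℤ] (R →₀ ℤ)) (φ₂ (single t 1)))) ∧
    φ₁ ∘ₗ bd =
      LinearMap.prod ((T₁ - LinearMap.id) ∘ₗ φ₂) ((T₂ - LinearMap.id) ∘ₗ φ₂) := by
  classical
  -- φ₁ absorbs ε on A-basis vectors
  have keyA : ∀ α : A, φ₁ (ε (single α 1, 0)) = φ₁ (single α 1, 0) := by
    intro α
    obtain ⟨y, ⟨hy, hcase⟩, -⟩ := hAplus α
    rcases hcase with rfl | h2
    · rw [hεA y hy]
    · have hα : α = barA y := by rw [h2, hbarA]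
      rw [hα, hεA' y hy, map_neg, hφ₁A, hφ₁A, hbarA, Prod.neg_mk, neg_sub, neg_zero]
  have keyB : ∀ β : B, φ₁ (ε (0, single β 1)) = φ₁ (0, single β 1) := by
    intro β
    obtain ⟨y, ⟨hy, hcase⟩, -⟩ := hBplus β
    rcases hcase with rfl | h2
    · rw [hεB y hy]
    · have hβ : β = barB y := by rw [h2, hbarB]
      rw [hβ, hεB' y hy, map_neg, hφ₁B, hφ₁B, hbarB, Prod.neg_mk, neg_sub, neg_zero]
  have main : ∀ t : R, φ₁ (bd (single t 1)) =
      ((T₁ - LinearMap.id : (R →₀ ℤ) →ₗ[ℤ] (R →₀ ℤ)) (φ₂ (single t 1)),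
       (T₂ - LinearMap.id : (R →₀ ℤ) →ₗ[ℤ] (R →₀ ℤ)) (φ₂ (single t 1))) := by
    intro t
    rw [hbd]
    simp only [map_add, map_sub, keyA, keyB, hφ₁A, hφ₁B, hφ₂,
      LinearMap.sub_apply, LinearMap.id_apply, hT₁, hT₂]
    simp only [← hah, ← hbv, hcomm, hh, hv]
    refine Prod.ext ?_ ?_ <;>
      simp only [Prod.fst_add, Prod.fst_sub, Prod.snd_add, Prod.snd_sub] <;>
      abel
  refine ⟨main, ?_⟩
  refine Finsupp.lhom_ext fun t m => ?_
  have hm : (single t m : R →₀ ℤ) = m • single t 1 := by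
    rw [smul_single, smul_eq_mul, mul_one]
  rw [hm, map_smul, map_smul]
  congr 1
  simpa [LinearMap.prod_apply, Pi.prod] using main t
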